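/- Let g : [0,∞) → [0,∞) be continuously differentiable and let γ : [0,∞) → (0,∞) and β : [0,∞) → (0,∞) be continuous functions such that g'(t) ≤ -γ(t)·g(t) + β(t) for all t ≥ 0. If ∫₀^∞ γ(t) dt = ∞ and lim_{t→∞} β(t)/γ(t) = 0, then lim_{t→∞} g(t) = 0. -/

import Mathlib

open MeasureTheory intervalIntegral Filter

/-- Lemma 3 of Liu et al., first consequence: if moreover
`∫₀^∞ γ = ∞` and `β/γ → 0`, then `g → 0`. -/
theorem stmt_1 (g g' γ β : ℝ → ℝ)
    (hg_nonneg : ∀ t ≥ (0:ℝ), 0 ≤ g t)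
    (hg_deriv : ∀ t ≥ (0:ℝ), HasDerivAt g (g' t) t)
    (hg'_cont : ContinuousOn g' (Set.Ici 0))
    (hγ_cont : ContinuousOn γ (Set.Ici 0))
    (hβ_cont : ContinuousOn β (Set.Ici 0))
    (hγ_pos : ∀ t ≥ (0:ℝ), 0 < γ t)
    (hβ_pos : ∀ t ≥ (0:ℝ), 0 < β t)
    (hineq : ∀ t ≥ (0:ℝ), g' t ≤ -γ t * g t + β t)
    (hγ_div : Tendsto (fun t => ∫ s in (0:ℝ)..t, γ s) atTop atTop)
    (hβγ : Tendsto (fun t => β t / γ t) atTop (nhds 0)) :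
    Tendsto g atTop (nhds 0) := by
  rw [Metric.tendsto_atTop]
  intro ε hε
  obtain ⟨T₀, hT₀⟩ := (Metric.tendsto_atTop.mp hβγ) (ε/4) (by linarith)
  set T : ℝ := max T₀ 1 with hTdef
  have hT1 : (1:ℝ) ≤ T := le_max_right _ _
  have hT0 : (0:ℝ) < T := by linarith
  -- bound on β
  have hβbound : ∀ t ≥ T, β t ≤ ε/4 * γ t := by
    intro t ht
    have htpos : (0:ℝ) ≤ t := le_trans hT0.le ht
    have h1 := hT₀ t (le_trans (le_max_left _ _) ht)
    rw [Real.dist_eq, sub_zero] at h1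
    have hγ := hγ_pos t htpos
    have h2 : β t / γ t < ε/4 := lt_of_abs_lt h1
    have h3 : β t = (β t / γ t) * γ t := by field_simp
    nlinarith
  -- integrability helper
  have hint : ∀ a b : ℝ, 0 ≤ a → 0 ≤ b → IntervalIntegrable γ volume a b := by
    intro a b ha hb
    apply ContinuousOn.intervalIntegrable
    apply hγ_cont.mono
    intro x hx
    rcases Set.mem_uIcc.mp hx with ⟨h, _⟩ | ⟨h, _⟩
    · exact le_trans ha h
    · exact le_trans hb h
  -- Γ and its derivative
  set Γ : ℝ → ℝ := fun u => ∫ s in T..u, γ s with hΓdef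
  have hΓderiv : ∀ t ≥ T, HasDerivAt Γ (γ t) t := by
    intro t ht
    have htpos : (0:ℝ) < t := lt_of_lt_of_le hT0 ht
    have hct : ContinuousAt γ t :=
      hγ_cont.continuousAt (Ici_mem_nhds htpos)
    have hmeas : StronglyMeasurableAtFilter γ (nhds t) := by
      refine ContinuousOn.stronglyMeasurableAtFilter isOpen_Ioi
        (hγ_cont.mono ?_) t htpos
      exact fun x hx => Set.mem_Ici.mpr (le_of_lt (Set.mem_Ioi.mp hx))
    exact intervalIntegral.integral_hasDerivAt_right
      (hint T t hT0.le htpos.le) hmeas hct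
  -- h and its derivative
  set h : ℝ → ℝ := fun u => (g u - ε/4) * Real.exp (Γ u) with hhdef
  have hhderiv : ∀ t ≥ T, HasDerivAt h
      (g' t * Real.exp (Γ t) + (g t - ε/4) * (γ t * Real.exp (Γ t))) t := by
    intro t ht
    have h1 : HasDerivAt (fun u => g u - ε/4) (g' t) t :=
      (hg_deriv t (le_trans hT0.le ht)).sub_const _
    have h2 : HasDerivAt (fun u => Real.exp (Γ u)) (γ t * Real.exp (Γ t)) t := by
      have := (hΓderiv t ht).exp
      simpa [mul_comm] using this
    exact h1.mul h2
  -- derivative nonpositive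
  have hder_nonpos : ∀ t ≥ T,
      g' t * Real.exp (Γ t) + (g t - ε/4) * (γ t * Real.exp (Γ t)) ≤ 0 := by
    intro t ht
    have htpos : (0:ℝ) ≤ t := le_trans hT0.le ht
    have hβb := hβbound t ht
    have hiq := hineq t htpos
    have hexp : (0:ℝ) < Real.exp (Γ t) := Real.exp_pos _
    have key : g' t + (g t - ε/4) * γ t ≤ 0 := by nlinarith
    nlinarith
  -- h is antitone on Ici T
  have hanti : AntitoneOn h (Set.Ici T) := by
    apply antitoneOn_of_deriv_nonpos (convex_Ici T)
    · intro t ht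
      exact (hhderiv t ht).continuousAt.continuousWithinAt
    · intro t ht
      rw [interior_Ici] at ht
      exact (hhderiv t (le_of_lt ht)).differentiableAt.differentiableWithinAt
    · intro t ht
      rw [interior_Ici] at ht
      rw [(hhderiv t (le_of_lt ht)).deriv]
      exact hder_nonpos t (le_of_lt ht)
  -- consequence: g t ≤ ε/4 + g T * exp (-Γ t)
  have hΓT : Γ T = 0 := intervalIntegral.integral_same
  have hbound : ∀ t ≥ T, g t ≤ ε/4 + g T * Real.exp (-(Γ t)) := by
    intro t ht
    have h1 : h t ≤ h T := hanti (Set.self_mem_Ici) ht ht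
    have h2 : h T = g T - ε/4 := by simp [hhdef, hΓT]
    have hexp : (0:ℝ) < Real.exp (Γ t) := Real.exp_pos _
    have h3 : (g t - ε/4) * Real.exp (Γ t) ≤ g T - ε/4 := by
      rw [← h2]; exact h1
    have h4 : g T - ε/4 ≤ g T := by linarith
    have h5 : (g t - ε/4) ≤ g T * Real.exp (-(Γ t)) := by
      rw [Real.exp_neg, ← div_eq_mul_inv, le_div_iff₀ hexp]
      linarith
    linarith
  -- Γ → ∞
  have hΓtop : Tendsto Γ atTop atTop := by
    have heq : ∀ᶠ t in atTop, (∫ s in (0:ℝ)..t, γ s) - (∫ s in (0:ℝ)..T, γ s) = Γ t := by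
      filter_upwards [eventually_ge_atTop (0:ℝ)] with t ht
      exact intervalIntegral.integral_interval_sub_left (hint 0 t le_rfl ht)
        (hint 0 T le_rfl hT0.le)
    exact Tendsto.congr' heq (hγ_div.atTop_add tendsto_const_nhds)
  -- g T * exp(-Γ t) → 0
  have hdecay : Tendsto (fun t => g T * Real.exp (-(Γ t))) atTop (nhds 0) := by
    have : Tendsto (fun t => Real.exp (-(Γ t))) atTop (nhds 0) :=
      Real.tendsto_exp_atBot.comp (tendsto_neg_atTop_atBot.comp hΓtop)
    simpa using this.const_mul (g T)
  obtain ⟨T₁, hT₁⟩ := (Metric.tendsto_atTop.mp hdecay) (ε/4) (by linarith)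
  refine ⟨max T T₁, fun t ht => ?_⟩
  have htT : T ≤ t := le_trans (le_max_left _ _) ht
  have h1 := hbound t htT
  have h2 := hT₁ t (le_trans (le_max_right _ _) ht)
  rw [Real.dist_eq, sub_zero] at h2
  have h3 : g T * Real.exp (-(Γ t)) < ε/4 := lt_of_abs_lt h2
  rw [Real.dist_eq, sub_zero]
  rw [abs_of_nonneg (hg_nonneg t (le_trans hT0.le htT))]
  linarith
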